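/- Let f be a polynomial in n−1 variables symmetric in the first n−2 of them (an 'almost symmetric' polynomial in x_2,...,x_n, symmetric in x_2,...,x_{n−1}). Then for any μ ⊢ n and part j of μ, the Z_1-idempotent Γ^{μ,j} is an eigenvector of f(J_2,...,J_n) with eigenvalue f(c_{j_−(μ)}, c_{μ,j}), where c_{j_−(μ)} is the multiset of contents of the shape j_−(μ) (assigned to x_2,...,x_{n−1} in any order) and c_{μ,j} is the content of the cell added to j_−(μ) to form μ. -/

import Mathlib

open scoped Classical
open Finset

noncomputable section

namespace NC

/-- Conjugation of a group-algebra element by a permutation, extended linearly. -/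
def conjA (n : ℕ) (σ : Equiv.Perm (Fin n)) (g : MonoidAlgebra ℂ (Equiv.Perm (Fin n))) :
    MonoidAlgebra ℂ (Equiv.Perm (Fin n)) :=
  MonoidAlgebra.mapDomain (fun π => σ * π * σ⁻¹) g

/-- Cycle type of a permutation, including fixed points as parts equal to 1
(a partition of n, as a multiset). -/
def fullType {n : ℕ} (π : Equiv.Perm (Fin n)) : Multiset ℕ :=
  π.cycleType + Multiset.replicate (n - π.support.card) 1

/-- The length of the cycle of `π` containing `x`. -/
def cycLenAt {n : ℕ} (π : Equiv.Perm (Fin n)) (x : Fin n) : ℕ :=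
  if π x = x then 1 else (π.cycleOf x).support.card

/-- The conjugacy class `C_λ` of permutations of `S_{n+1}` of cycle type `λ`. -/
def Ccl (n : ℕ) (lam : Multiset ℕ) : Finset (Equiv.Perm (Fin (n + 1))) :=
  Finset.univ.filter fun π => fullType π = lam

/-- `C_{λ,i}`: permutations of cycle type `λ` having the largest symbol on a cycle of length `i`. -/
def Cset (n : ℕ) (lam : Multiset ℕ) (i : ℕ) : Finset (Equiv.Perm (Fin (n + 1))) :=
  (Ccl n lam).filter fun π => cycLenAt π (Fin.last n) = i

/-- The standard basis element `K_{λ,i}` of `Z_1(n+1)`. -/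
def Kel (n : ℕ) (lam : Multiset ℕ) (i : ℕ) : MonoidAlgebra ℂ (Equiv.Perm (Fin (n + 1))) :=
  ∑ π ∈ Cset n lam i, MonoidAlgebra.single π 1

/-- Membership in the centralizer `Z_1(n+1)` of the group algebra with respect to the
subgroup of permutations fixing the largest symbol. -/
def Z1mem (n : ℕ) (g : MonoidAlgebra ℂ (Equiv.Perm (Fin (n + 1)))) : Prop :=
  ∀ σ : Equiv.Perm (Fin (n + 1)), σ (Fin.last n) = Fin.last n → conjA (n + 1) σ g = g

/-- A filling `T : Fin m → Fin m × Fin m` (position of each entry, as (row, column))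
is a standard Young tableau: it is injective and every initial segment of entries occupies a
lower set of cells (entries increase along rows and down columns). -/
def IsSYT (m : ℕ) (T : Fin m → Fin m × Fin m) : Prop :=
  Function.Injective T ∧
    ∀ k : Fin m, ∀ c : Fin m × Fin m, c.1 ≤ (T k).1 → c.2 ≤ (T k).2 → ∃ j : Fin m, j ≤ k ∧ T j = c

/-- Length of row `r` of a filling. -/
def rowLen (m : ℕ) (T : Fin m → Fin m × Fin m) (r : ℕ) : ℕ :=
  (Finset.univ.filter fun k => ((T k).1 : ℕ) = r).card

/-- The shape of a filling, as the multiset of its (positive) row lengths. -/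
def shapeOf (m : ℕ) (T : Fin m → Fin m × Fin m) : Multiset ℕ :=
  ((Multiset.range m).map fun r => rowLen m T r).filter (0 < ·)

/-- The set of standard Young tableaux of shape `λ` with `m` cells. -/
def SYTall (m : ℕ) (lam : Multiset ℕ) : Finset (Fin m → Fin m × Fin m) :=
  Finset.univ.filter fun T => IsSYT m T ∧ shapeOf m T = lam

/-- `d_λ`, the number of standard Young tableaux of shape `λ`. -/
def dnum (m : ℕ) (lam : Multiset ℕ) : ℕ := (SYTall m lam).card

/-- `SYT_{λ,i}`: standard Young tableaux of shape `λ` in which the largest entry lies at the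
end of a row of length `i`. -/
def SYTset (n : ℕ) (lam : Multiset ℕ) (i : ℕ) :
    Finset (Fin (n + 1) → Fin (n + 1) × Fin (n + 1)) :=
  (SYTall (n + 1) lam).filter fun T => rowLen (n + 1) T ((T (Fin.last n)).1 : ℕ) = i

/-- The content (column minus row) of the entry `k` in the tableau `T`. -/
def ct (m : ℕ) (T : Fin m → Fin m × Fin m) (k : Fin m) : ℤ :=
  ((T k).2 : ℤ) - ((T k).1 : ℤ)

/-- The Jucys–Murphy element `J_{x+1} = Σ_{y<x} (y, x)` of `ℂ[S_m]`. -/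
def JM (m : ℕ) (x : Fin m) : MonoidAlgebra ℂ (Equiv.Perm (Fin m)) :=
  ∑ y ∈ Finset.univ.filter (fun y : Fin m => y < x), MonoidAlgebra.single (Equiv.swap y x) 1

/-- Young's seminormal unit `e_T`: the Gelfand–Tsetlin idempotent attached to `T`, realized by
Murphy's interpolation formula as a product of spectral projections of the Jucys–Murphy
elements onto the content eigenvalues of `T`. -/
def eTg (m : ℕ) (T : Fin m → Fin m × Fin m) : MonoidAlgebra ℂ (Equiv.Perm (Fin m)) :=
  ((List.finRange m).map fun (x : Fin m) =>
    (((((Finset.Icc (-((x : ℕ) : ℤ)) ((x : ℕ) : ℤ)).erase (ct m T x)).sort (· ≤ ·)).map fun c =>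
      (((ct m T x - c : ℤ) : ℂ))⁻¹ •
        (JM m x - ((c : ℤ) : ℂ) • (1 : MonoidAlgebra ℂ (Equiv.Perm (Fin m))))).prod)).prod

/-- The central element `X^λ = Σ_{T ∈ SYT_λ} e_T` of `ℂ[S_m]` (the central orthogonal
idempotent indexed by `λ`). -/
def Xg (m : ℕ) (lam : Multiset ℕ) : MonoidAlgebra ℂ (Equiv.Perm (Fin m)) :=
  ∑ T ∈ SYTall m lam, eTg m T

/-- The `Z_1`-idempotent `Γ^{λ,i} = Σ_{T ∈ SYT_{λ,i}} e_T`. -/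
def Gam (n : ℕ) (lam : Multiset ℕ) (i : ℕ) : MonoidAlgebra ℂ (Equiv.Perm (Fin (n + 1))) :=
  ∑ T ∈ SYTset n lam i, eTg (n + 1) T

/-- `i_-(λ)`: the partition obtained from `λ` by replacing one part `i` by `i - 1`. -/
def iminus (lam : Multiset ℕ) (i : ℕ) : Multiset ℕ :=
  ((i - 1) ::ₘ lam.erase i).filter (0 < ·)

/-- `c_{λ,i} = i - Σ_{k ≥ i} m_k(λ)`: the content of the cell containing the largest entry in
any tableau of shape `λ` with that entry at the end of a row of length `i`. -/
def cCorner (lam : Multiset ℕ) (i : ℕ) : ℤ :=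
  (i : ℤ) - ((lam.filter fun k => i ≤ k).card : ℤ)

/-- The multiset of contents of the cells of the Ferrers diagram of `λ`. -/
def contentsM (lam : Multiset ℕ) : Multiset ℤ :=
  ↑((((lam.sort (· ≤ ·)).reverse.zipIdx).map fun p =>
      (List.range p.1).map fun c => (c : ℤ) - (p.2 : ℤ)).flatten)

/-- The generalized character `γ^{μ,j}_{λ,i} = (n!/d_μ) [K_{λ,i}] Γ^{μ,j}`, the (normalized)
coefficient of the standard basis element `K_{λ,i}` in `Γ^{μ,j}` (computed as the average of the
coefficients of `Γ^{μ,j}` over the class `C_{λ,i}`). -/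
def gam (n : ℕ) (mu : Multiset ℕ) (j : ℕ) (lam : Multiset ℕ) (i : ℕ) : ℂ :=
  ((Nat.factorial (n + 1) : ℂ) / (dnum (n + 1) mu : ℂ)) *
    ((∑ π ∈ Cset n lam i, (Gam n mu j).coeff π) / ((Cset n lam i).card : ℂ))

/-- The irreducible character `χ^μ` evaluated at `π`: `(n!/d_μ)` times the coefficient of `π`
in the central idempotent `X^μ`. -/
def chi (n : ℕ) (mu : Multiset ℕ) (π : Equiv.Perm (Fin (n + 1))) : ℂ :=
  ((Nat.factorial (n + 1) : ℂ) / (dnum (n + 1) mu : ℂ)) * (Xg (n + 1) mu).coeff π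

/-- The embedding of a permutation of `Fin n` into `S_{n+1}` fixing the last symbol. -/
def extPerm (n : ℕ) (π : Equiv.Perm (Fin n)) : Equiv.Perm (Fin (n + 1)) :=
  π.viaFintypeEmbedding (Fin.castSuccEmb : Fin n ↪ Fin (n + 1))

/-- The induced embedding of group algebras `ℂ[S_n] → ℂ[S_{n+1}]`. -/
def embA (n : ℕ) (g : MonoidAlgebra ℂ (Equiv.Perm (Fin n))) :
    MonoidAlgebra ℂ (Equiv.Perm (Fin (n + 1))) :=
  MonoidAlgebra.mapDomain (extPerm n) g


/-- Evaluation of a multivariate polynomial at a (commuting) family of elements of a possibly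
noncommutative algebra, monomial by monomial. -/
def polyEval {k : ℕ} {A : Type*} [Ring A] [Algebra ℂ A]
    (f : MvPolynomial (Fin k) ℂ) (J : Fin k → A) : A :=
  ∑ d ∈ f.support, MvPolynomial.coeff d f • ((List.finRange k).map fun v => J v ^ d v).prod

section Sec1

variable {m : ℕ}

/-- Abbreviation for the group algebra. -/
abbrev GA (m : ℕ) := MonoidAlgebra ℂ (Equiv.Perm (Fin m))

lemma swap_conj (σ : Equiv.Perm (Fin m)) (y x : Fin m) :
    σ * Equiv.swap y x = Equiv.swap (σ y) (σ x) * σ := by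
  rw [Equiv.swap_apply_apply]; group

lemma JM_commute_single {x : Fin m} {σ : Equiv.Perm (Fin m)} (hfix : σ x = x)
    (hlt : ∀ y : Fin m, σ y < x ↔ y < x) :
    Commute (JM m x) (MonoidAlgebra.single σ (1:ℂ)) := by
  unfold JM Commute SemiconjBy
  rw [Finset.sum_mul, Finset.mul_sum]
  simp only [MonoidAlgebra.single_mul_single, one_mul, mul_one]
  have key : ∀ y : Fin m, σ * Equiv.swap y x = Equiv.swap (σ y) x * σ := by
    intro y; rw [swap_conj, hfix]
  refine (Finset.sum_nbij' (i := fun y => σ y) (j := fun y => σ⁻¹ y) ?_ ?_ ?_ ?_ ?_).symm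
  · intro a ha
    simp only [Finset.mem_filter, Finset.mem_univ, true_and] at ha ⊢
    exact (hlt a).2 ha
  · intro a ha
    simp only [Finset.mem_filter, Finset.mem_univ, true_and] at ha ⊢
    have := hlt (σ⁻¹ a); simp at this; exact this.1 ha
  · intro a _; simp
  · intro a _; simp
  · intro a _; rw [key]

lemma swap_lt_iff {y a x : Fin m} (hy : y < x) (ha : a < x) :
    ∀ z : Fin m, Equiv.swap y a z < x ↔ z < x := by
  intro z
  rcases eq_or_ne z y with rfl | h1
  · simp [Equiv.swap_apply_left, ha, hy]
  rcases eq_or_ne z a with rfl | h2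
  · simp [Equiv.swap_apply_right, ha, hy]
  · rw [Equiv.swap_apply_of_ne_of_ne h1 h2]

lemma JM_commute_JM (a b : Fin m) : Commute (JM m a) (JM m b) := by
  -- wlog
  have key : ∀ a b : Fin m, a < b → Commute (JM m a) (JM m b) := by
    intro a b hab
    have : ∀ y ∈ Finset.univ.filter (fun y : Fin m => y < a),
        Commute (JM m b) (MonoidAlgebra.single (Equiv.swap y a) (1:ℂ)) := by
      intro y hy
      simp only [Finset.mem_filter, Finset.mem_univ, true_and] at hy
      refine JM_commute_single ?_ (swap_lt_iff (hy.trans hab) hab)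
      exact Equiv.swap_apply_of_ne_of_ne (ne_of_gt (hy.trans hab)) (ne_of_gt hab)
    exact (Commute.sum_right _ _ _ this).symm
  rcases lt_trichotomy a b with h | rfl | h
  · exact key a b h
  · exact Commute.refl _
  · exact (key b a h).symm

lemma JM_commute_factor (x y : Fin m) (c : ℂ) :
    Commute (JM m x) (JM m y - c • 1) :=
  (JM_commute_JM x y).sub_right ((Commute.one_right _).smul_right c)

/-- product of `J - c` over a finset of integers. -/
def qL (s : Finset ℤ) (J : GA m) : GA m :=
  ((s.sort (· ≤ ·)).map fun c => J - ((c : ℤ) : ℂ) • 1).prod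

lemma pairwise_commute_of_forall {α : Type*} (F : α → GA m) (l : List α)
    (h : ∀ a b, Commute (F a) (F b)) :
    List.Pairwise Commute (l.map F) := by
  induction l with
  | nil => simp
  | cons a l ih =>
    simp only [List.map_cons, List.pairwise_cons]
    exact ⟨by intro b hb; obtain ⟨c, _, rfl⟩ := List.mem_map.1 hb; exact h a c, ih⟩

lemma commute_central (z : GA m) (c : ℂ) : Commute (c • (1 : GA m)) z :=
  (Commute.one_left z).smul_left c

lemma commute_sub_central {J : GA m} (c d : ℂ) : Commute (J - c • 1) (J - d • 1) :=
  Commute.sub_left ((Commute.refl J).sub_right ((Commute.one_right J).smul_right d))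
    (commute_central _ c)

lemma qL_insert {s : Finset ℤ} {t : ℤ} (ht : t ∉ s) (J : GA m) :
    qL (insert t s) J = (J - ((t : ℤ) : ℂ) • 1) * qL s J := by
  unfold qL
  have hperm : ((insert t s).sort (· ≤ ·)).Perm (t :: s.sort (· ≤ ·)) := by
    rw [← Multiset.coe_eq_coe, Finset.sort_eq, ← Multiset.cons_coe, Finset.sort_eq,
      Finset.insert_val_of_notMem ht]
  have := (hperm.map fun c => J - ((c : ℤ) : ℂ) • 1).prod_eq'
    (pairwise_commute_of_forall _ _ (fun a b => commute_sub_central _ _))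
  rw [this, List.map_cons, List.prod_cons]

end Sec1

section Sec2

variable {m : ℕ}

instance : FiniteDimensional ℂ (GA m) :=
  Module.Finite.of_basis (MonoidAlgebra.basis (Equiv.Perm (Fin m)) ℂ)

lemma list_prod_eigen (J w : GA m) (lam : ℂ) (hw : J * w = lam • w) (l : List ℤ) :
    ((l.map fun c => J - ((c : ℤ) : ℂ) • 1).prod) * w
      = ((l.map fun c => lam - ((c : ℤ) : ℂ)).prod) • w := by
  induction l with
  | nil => simp
  | cons c l ih =>
    simp only [List.map_cons, List.prod_cons, mul_assoc, ih]
    rw [mul_smul_comm, sub_mul, hw, smul_mul_assoc, one_mul, ← sub_smul, smul_smul,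
      mul_comm]

lemma prod_sort_eq (s : Finset ℤ) (f : ℤ → ℂ) :
    ((s.sort (· ≤ ·)).map f).prod = ∏ c ∈ s, f c := by
  rw [Finset.prod_eq_multiset_prod, ← Finset.sort_eq s (· ≤ ·)]
  rfl

lemma qL_mul_eigen (s : Finset ℤ) (J w : GA m) (lam : ℂ) (hw : J * w = lam • w) :
    qL s J * w = (∏ c ∈ s, (lam - (c : ℂ))) • w := by
  rw [qL, list_prod_eigen J w lam hw, prod_sort_eq]

lemma qL_erase {s : Finset ℤ} {c0 : ℤ} (hc0 : c0 ∈ s) (J : GA m) :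
    qL s J = qL (s.erase c0) J * (J - ((c0 : ℤ) : ℂ) • 1) := by
  conv_lhs => rw [← Finset.insert_erase hc0]
  rw [qL_insert (Finset.notMem_erase _ _) J]
  have hc : Commute (J - ((c0 : ℤ) : ℂ) • 1) (qL (s.erase c0) J) := by
    refine Commute.list_prod_right _ _ ?_
    intro y hy
    obtain ⟨c, _, rfl⟩ := List.mem_map.1 hy
    exact commute_sub_central _ _
  exact hc.eq

/-- inner product on the group algebra -/
def ip (a b : GA m) : ℂ := ∑ σ : Equiv.Perm (Fin m), (starRingEnd ℂ) (a.coeff σ) * b.coeff σ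

lemma ip_self_ne_zero {v : GA m} (hv : v ≠ 0) : ip v v ≠ 0 := by
  have h1 : ip v v = ((∑ σ : Equiv.Perm (Fin m), Complex.normSq (v.coeff σ) : ℝ) : ℂ) := by
    unfold ip
    push_cast
    refine Finset.sum_congr rfl fun σ _ => ?_
    rw [mul_comm, Complex.mul_conj]
  rw [h1]
  obtain ⟨σ0, hσ0⟩ := Finsupp.ne_iff.1 (fun h => hv (MonoidAlgebra.coeff_eq_zero.1 h))
  have hpos : 0 < ∑ σ : Equiv.Perm (Fin m), Complex.normSq (v.coeff σ) := by
    refine Finset.sum_pos' (fun σ _ => Complex.normSq_nonneg _) ⟨σ0, Finset.mem_univ _, ?_⟩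
    simpa using Complex.normSq_pos.2 hσ0
  exact_mod_cast ne_of_gt hpos

lemma ip_single_mul (τ : Equiv.Perm (Fin m)) (a b : GA m) :
    ip (MonoidAlgebra.single τ 1 * a) b = ip a (MonoidAlgebra.single τ⁻¹ 1 * b) := by
  unfold ip
  refine Fintype.sum_equiv (Equiv.mulLeft τ).symm _ _ fun σ => ?_
  simp [MonoidAlgebra.coeff_single_mul_apply, mul_assoc]

lemma ip_sum_left {α : Type*} (s : Finset α) (f : α → GA m) (b : GA m) :
    ip (∑ i ∈ s, f i) b = ∑ i ∈ s, ip (f i) b := by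
  unfold ip
  rw [Finset.sum_comm]
  refine Finset.sum_congr rfl fun σ _ => ?_
  rw [MonoidAlgebra.coeff_sum, Finsupp.finset_sum_apply, map_sum, Finset.sum_mul]

lemma ip_sum_right {α : Type*} (s : Finset α) (f : α → GA m) (b : GA m) :
    ip b (∑ i ∈ s, f i) = ∑ i ∈ s, ip b (f i) := by
  unfold ip
  rw [Finset.sum_comm]
  refine Finset.sum_congr rfl fun σ _ => ?_
  rw [MonoidAlgebra.coeff_sum, Finsupp.finset_sum_apply, Finset.mul_sum]

lemma ip_J (x : Fin m) (a b : GA m) : ip (JM m x * a) b = ip a (JM m x * b) := by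
  unfold JM
  rw [Finset.sum_mul, Finset.sum_mul, ip_sum_left, ip_sum_right]
  refine Finset.sum_congr rfl fun y _ => ?_
  have := ip_single_mul (m := m) (Equiv.swap y x) a b
  rwa [Equiv.swap_inv] at this

lemma ip_sub_left (a a' b : GA m) : ip (a - a') b = ip a b - ip a' b := by
  unfold ip
  rw [← Finset.sum_sub_distrib]
  refine Finset.sum_congr rfl fun σ _ => ?_
  rw [MonoidAlgebra.coeff_sub, Finsupp.sub_apply, map_sub, sub_mul]

lemma ip_sub_right (a b b' : GA m) : ip a (b - b') = ip a b - ip a b' := by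
  unfold ip
  rw [← Finset.sum_sub_distrib]
  refine Finset.sum_congr rfl fun σ _ => ?_
  rw [MonoidAlgebra.coeff_sub, Finsupp.sub_apply, mul_sub]

lemma ip_smul_left (c : ℂ) (a b : GA m) : ip (c • a) b = (starRingEnd ℂ) c * ip a b := by
  unfold ip
  rw [Finset.mul_sum]
  refine Finset.sum_congr rfl fun σ _ => ?_
  rw [MonoidAlgebra.coeff_smul, Finsupp.smul_apply, smul_eq_mul, map_mul, mul_assoc]

lemma ip_smul_right (c : ℂ) (a b : GA m) : ip a (c • b) = c * ip a b := by
  unfold ip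
  rw [Finset.mul_sum]
  refine Finset.sum_congr rfl fun σ _ => ?_
  rw [MonoidAlgebra.coeff_smul, Finsupp.smul_apply, smul_eq_mul]; ring

lemma ip_zero_right (a : GA m) : ip a 0 = 0 := by
  unfold ip; simp

lemma herm_collapse (x : Fin m) (lam : ℂ) (hreal : (starRingEnd ℂ) lam = lam) (w : GA m)
    (h2 : JM m x * (JM m x * w - lam • w) - lam • (JM m x * w - lam • w) = 0) :
    JM m x * w - lam • w = 0 := by
  by_contra hne
  refine ip_self_ne_zero hne ?_
  have key : ∀ z, ip (JM m x * w - lam • w) z = ip w (JM m x * z - lam • z) := fun z => by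
    rw [ip_sub_left, ip_smul_left, hreal, ip_J, ← ip_smul_right, ← ip_sub_right]
  rw [key, h2, ip_zero_right]

end Sec2

section Sec3

variable {m : ℕ}

lemma JM_succ_rel (x x' : Fin m) (hx : (x : ℕ) = (x' : ℕ) + 1) :
    JM m x = MonoidAlgebra.single (Equiv.swap x' x) 1 * JM m x' *
        MonoidAlgebra.single (Equiv.swap x' x) 1 +
      MonoidAlgebra.single (Equiv.swap x' x) (1 : ℂ) := by
  have hset : Finset.univ.filter (fun y : Fin m => y < x)
      = insert x' (Finset.univ.filter (fun y : Fin m => y < x')) := by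
    ext y
    simp only [Finset.mem_filter, Finset.mem_univ, true_and, Finset.mem_insert]
    rw [Fin.lt_def, Fin.lt_def, hx, Nat.lt_succ_iff_lt_or_eq]
    constructor
    · rintro (h | h)
      · right; exact h
      · left; exact Fin.ext h
    · rintro (h | h)
      · right; exact congrArg Fin.val h
      · left; exact h
  rw [JM, hset, Finset.sum_insert (by simp)]
  have hs : ∀ y : Fin m, y < x' →
      Equiv.swap x' x * Equiv.swap y x' * Equiv.swap x' x = Equiv.swap y x := by
    intro y hy
    have h1 : y ≠ x' := ne_of_lt hy
    have h2 : y ≠ x := by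
      intro h; rw [h] at hy; rw [Fin.lt_def, hx] at hy; omega
    have h3 := Equiv.swap_apply_apply (Equiv.swap x' x) y x'
    rw [Equiv.swap_apply_of_ne_of_ne h1 h2, Equiv.swap_apply_left, Equiv.swap_inv] at h3
    exact h3.symm
  rw [JM, Finset.mul_sum, Finset.sum_mul, add_comm]
  congr 1
  refine Finset.sum_congr rfl fun y hy => ?_
  simp only [Finset.mem_filter, Finset.mem_univ, true_and] at hy
  rw [MonoidAlgebra.single_mul_single, MonoidAlgebra.single_mul_single, one_mul, mul_one,
    hs y hy]

lemma eig_exists (x : Fin m) (lam : ℂ) :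
    ∀ (p : ℕ) (w : GA m), w ≠ 0 →
      (((LinearMap.mulLeft ℂ (JM m x) : Module.End ℂ (GA m)) - lam • 1) ^ p) w = 0 →
      ∃ u : GA m, u ≠ 0 ∧ JM m x * u = lam • u := by
  intro p
  induction p with
  | zero => intro w hw h; simp at h; exact absurd h hw
  | succ p ih =>
    intro w hw h
    set L : Module.End ℂ (GA m) := LinearMap.mulLeft ℂ (JM m x) with hL
    by_cases hz : (L - lam • 1) w = 0
    · refine ⟨w, hw, ?_⟩
      have h5 : JM m x * w - lam • w = 0 := by
        simpa [hL, LinearMap.sub_apply, LinearMap.mulLeft_apply] using hz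
      exact sub_eq_zero.1 h5
    · refine ih ((L - lam • 1) w) hz ?_
      rw [← Module.End.mul_apply, ← pow_succ]
      exact h

lemma collapse_pow (x : Fin m) (lam : ℂ) (hreal : (starRingEnd ℂ) lam = lam) :
    ∀ (p : ℕ) (w : GA m),
      (((LinearMap.mulLeft ℂ (JM m x) : Module.End ℂ (GA m)) - lam • 1) ^ p) w = 0 →
      JM m x * w = lam • w := by
  intro p
  induction p with
  | zero =>
    intro w h; simp at h; rw [h]; simp
  | succ p ih =>
    intro w h
    set L : Module.End ℂ (GA m) := LinearMap.mulLeft ℂ (JM m x) with hL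
    have h' : ((L - lam • 1) ^ p) ((L - lam • 1) w) = 0 := by
      rw [← Module.End.mul_apply, ← pow_succ]; exact h
    have h2 := ih _ h'
    have h3 : (L - lam • 1) w = JM m x * w - lam • w := by
      simp [hL, LinearMap.sub_apply, LinearMap.mulLeft_apply]
    rw [h3] at h2
    have h4 : JM m x * (JM m x * w - lam • w) - lam • (JM m x * w - lam • w) = 0 := by
      rw [h2]; module
    exact sub_eq_zero.1 (herm_collapse x lam hreal w h4)

theorem qL_JM (x : Fin m) :
    qL (Finset.Icc (-((x : ℕ) : ℤ)) ((x : ℕ) : ℤ)) (JM m x) = 0 := by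
  suffices H : ∀ (k : ℕ) (x : Fin m), (x : ℕ) = k →
      qL (Finset.Icc (-(k : ℤ)) (k : ℤ)) (JM m x) = 0 by
    simpa using H (x : ℕ) x rfl
  intro k
  induction k with
  | zero =>
    intro x hx
    have hJ : JM m x = 0 := by
      rw [JM]
      have he : Finset.univ.filter (fun y : Fin m => y < x) = ∅ := by
        ext y; simp only [Finset.mem_filter, Finset.mem_univ, true_and,
          Finset.notMem_empty, iff_false]
        intro h; rw [Fin.lt_def, hx] at h; omega
      rw [he, Finset.sum_empty]
    have h0 : Finset.Icc (-((0:ℕ):ℤ)) ((0:ℕ):ℤ) = {0} := by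
      ext c; simp
    rw [h0, qL]
    simp [hJ]
  | succ k ih =>
    intro x hx
    have hcast : (((k+1 : ℕ)) : ℤ) = (k:ℤ)+1 := by push_cast; ring
    rw [hcast]
    have hkm : k < m := by have := x.isLt; omega
    set x' : Fin m := ⟨k, hkm⟩ with hx'
    have IH := ih x' rfl
    set J := JM m x with hJdef
    set J' := JM m x' with hJ'def
    set sτ := MonoidAlgebra.single (Equiv.swap x' x) (1:ℂ) with hsτ
    have hss : sτ * sτ = 1 := by
      rw [hsτ, MonoidAlgebra.single_mul_single, Equiv.swap_mul_self, one_mul]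
      exact (MonoidAlgebra.one_def).symm
    have rel : J = sτ * J' * sτ + sτ := JM_succ_rel x x' hx
    have rel' : J' = sτ * J * sτ - sτ := by
      rw [rel, show sτ * (sτ * J' * sτ + sτ) * sτ
        = (sτ * sτ) * J' * (sτ * sτ) + (sτ * sτ) * sτ from by noncomm_ring, hss]
      simp
    have hloc : ∀ (lam : ℂ) (v : GA m), v ≠ 0 → J * v = lam • v →
        ∏ c ∈ Finset.Icc (-((k:ℤ)+1)) ((k:ℤ)+1), (lam - (c : ℂ)) = 0 := by
      intro lam v hv hJv
      set L : Module.End ℂ (GA m) := LinearMap.mulLeft ℂ J with hL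
      set E := Module.End.eigenspace L lam with hE
      have hmem : v ∈ E := Module.End.mem_eigenspace_iff.2
        (by simpa [hL, LinearMap.mulLeft_apply] using hJv)
      have hmapsTo : ∀ w ∈ E, (LinearMap.mulLeft ℂ J') w ∈ E := by
        intro w hw
        have hw' : L w = lam • w := Module.End.mem_eigenspace_iff.1 hw
        refine Module.End.mem_eigenspace_iff.2 ?_
        simp only [hL, LinearMap.mulLeft_apply] at hw' ⊢
        have hcomm : J * J' = J' * J := (JM_commute_JM x x').eq
        rw [← mul_assoc, hcomm, mul_assoc, hw', mul_smul_comm]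
      set R : Module.End ℂ E := (LinearMap.mulLeft ℂ J').restrict hmapsTo with hR
      have : Nontrivial E := by
        refine nontrivial_of_ne ⟨v, hmem⟩ 0 ?_
        simp only [ne_eq, Submodule.mk_eq_zero]
        exact hv
      obtain ⟨a, ha⟩ := Module.End.exists_eigenvalue R
      obtain ⟨w0, hw0⟩ := ha.exists_hasEigenvector
      set w : GA m := (w0 : GA m) with hwdef
      have hwne : w ≠ 0 := by
        simpa [hwdef, ne_eq, Submodule.coe_eq_zero] using hw0.right
      have hJw : J * w = lam • w := by
        have h6 : L w = lam • w := Module.End.mem_eigenspace_iff.1 w0.2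
        simpa [hL, LinearMap.mulLeft_apply] using h6
      have hJ'w : J' * w = a • w := by
        have h7 := congrArg (Subtype.val) hw0.apply_eq_smul
        simpa [hR, LinearMap.restrict_apply, LinearMap.mulLeft_apply,
          Submodule.coe_smul] using h7
      have hIH0 : (∏ c ∈ Finset.Icc (-(k:ℤ)) (k:ℤ), (a - (c : ℂ))) • w = 0 := by
        rw [← qL_mul_eigen _ _ _ _ hJ'w, IH, zero_mul]
      have hprod : ∏ c ∈ Finset.Icc (-(k:ℤ)) (k:ℤ), (a - (c : ℂ)) = 0 :=
        (smul_eq_zero.1 hIH0).resolve_right hwne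
      obtain ⟨c0, hc0mem, hc0⟩ := Finset.prod_eq_zero_iff.1 hprod
      have ha0 : a = (c0 : ℂ) := by linear_combination hc0
      have hc0mem' := Finset.mem_Icc.1 hc0mem
      suffices hc1 : ∃ c1 ∈ Finset.Icc (-((k:ℤ)+1)) ((k:ℤ)+1), lam = (c1 : ℂ) by
        obtain ⟨c1, hm1, he1⟩ := hc1
        exact Finset.prod_eq_zero hm1 (by rw [he1, sub_self])
      by_cases hcase : lam = (c0 : ℂ) + 1 ∨ lam = (c0 : ℂ) - 1
      · rcases hcase with h | h
        · exact ⟨c0 + 1, Finset.mem_Icc.2 (by omega), by push_cast; exact h⟩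
        · exact ⟨c0 - 1, Finset.mem_Icc.2 (by omega), by push_cast; exact h⟩
      push_neg at hcase
      obtain ⟨hne1, hne2⟩ := hcase
      set u := sτ * w with hu
      have hsu : sτ * u = w := by rw [hu, ← mul_assoc, hss, one_mul]
      have hJ'u : J' * u = lam • u - w :=
        calc J' * u = (sτ * J * sτ - sτ) * (sτ * w) := by rw [hu, ← rel']
          _ = sτ * J * (sτ * sτ) * w - (sτ * sτ) * w := by noncomm_ring
          _ = sτ * (J * w) - w := by rw [hss]; noncomm_ring
          _ = lam • (sτ * w) - w := by rw [hJw, mul_smul_comm]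
          _ = lam • u - w := by rw [hu]
      by_cases hla : lam = a
      · exfalso
        have h0 : qL (Finset.Icc (-(k:ℤ)) (k:ℤ)) J' * u = 0 := by rw [IH, zero_mul]
        rw [qL_erase hc0mem J', mul_assoc] at h0
        have hstep : (J' - ((c0 : ℤ) : ℂ) • 1) * u = -w := by
          rw [sub_mul, hJ'u, smul_mul_assoc, one_mul, hla, ha0]
          module
        rw [hstep, mul_neg, neg_eq_zero] at h0
        rw [qL_mul_eigen _ _ _ _ hJ'w] at h0
        have hprod2 : ∏ c ∈ (Finset.Icc (-(k:ℤ)) (k:ℤ)).erase c0, (a - (c : ℂ)) = 0 :=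
          (smul_eq_zero.1 h0).resolve_right hwne
        obtain ⟨c2, hc2m, hc2⟩ := Finset.prod_eq_zero_iff.1 hprod2
        have : a = (c2 : ℂ) := by linear_combination hc2
        rw [ha0] at this
        have : c0 = c2 := by exact_mod_cast this
        exact (Finset.mem_erase.1 hc2m).1 this.symm
      · have hd : lam - a ≠ 0 := sub_ne_zero.2 hla
        set w' := u - (lam - a)⁻¹ • w with hw'
        have hJ'w' : J' * w' = lam • w' := by
          rw [hw', mul_sub, hJ'u, mul_smul_comm, hJ'w]
          match_scalars
          · ring
          · field_simp
            ring
        have hw'ne : w' ≠ 0 := by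
          intro h0
          have husm : u = (lam - a)⁻¹ • w := by rwa [hw', sub_eq_zero] at h0
          have hcyc : w = ((lam - a)⁻¹ * (lam - a)⁻¹) • w := by
            conv_lhs => rw [← hsu, husm, mul_smul_comm, ← hu, husm, smul_smul]
          have h1 : ((lam - a)⁻¹ * (lam - a)⁻¹ - 1) • w = 0 := by
            rw [sub_smul, one_smul, ← hcyc, sub_self]
          have h2 : (lam - a)⁻¹ * (lam - a)⁻¹ - 1 = 0 :=
            (smul_eq_zero.1 h1).resolve_right hwne
          have h3 : (lam - a) * (lam - a) = 1 := by
            field_simp at h2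
            linear_combination -h2
          have h5 : (lam - a - 1) * (lam - a + 1) = 0 := by linear_combination h3
          rcases mul_eq_zero.1 h5 with h6 | h6
          · exact hne1 (by rw [← ha0]; linear_combination h6)
          · exact hne2 (by rw [← ha0]; linear_combination h6)
        have h0 : (∏ c ∈ Finset.Icc (-(k:ℤ)) (k:ℤ), (lam - (c : ℂ))) • w' = 0 := by
          rw [← qL_mul_eigen _ _ _ _ hJ'w', IH, zero_mul]
        have hprod2 := (smul_eq_zero.1 h0).resolve_right hw'ne
        obtain ⟨c1, hc1m, hc1⟩ := Finset.prod_eq_zero_iff.1 hprod2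
        have hc1m' := Finset.mem_Icc.1 hc1m
        exact ⟨c1, Finset.mem_Icc.2 (by omega), by linear_combination hc1⟩
    -- conclude the element identity
    have hall : ∀ v : GA m, qL (Finset.Icc (-((k:ℤ)+1)) ((k:ℤ)+1)) J * v = 0 := by
      intro v
      have hv : v ∈ (⊤ : Submodule ℂ (GA m)) := Submodule.mem_top
      rw [← Module.End.iSup_maxGenEigenspace_eq_top (LinearMap.mulLeft ℂ J)] at hv
      refine Submodule.iSup_induction (motive := fun v => qL (Finset.Icc (-((k:ℤ)+1)) ((k:ℤ)+1)) J * v = 0)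
        _ hv ?_ (by simp) ?_
      · intro lam w hw
        by_cases hw0 : w = 0
        · rw [hw0, mul_zero]
        obtain ⟨p, hp⟩ := (Module.End.mem_maxGenEigenspace _ _ _).1 hw
        obtain ⟨uu, hune, hueig⟩ := eig_exists x lam p w hw0 hp
        have hroot := hloc lam uu hune hueig
        have hreal : (starRingEnd ℂ) lam = lam := by
          obtain ⟨c1, _, hc1⟩ := Finset.prod_eq_zero_iff.1 hroot
          have : lam = (c1 : ℂ) := by linear_combination hc1
          rw [this]
          simp
        have heig := collapse_pow x lam hreal p w hp
        rw [qL_mul_eigen _ _ _ _ heig, hroot, zero_smul]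
      · intro a b ha hb; rw [mul_add, ha, hb, add_zero]
    have hfin := hall 1
    rwa [mul_one] at hfin

end Sec3

section Sec4

variable {m : ℕ}

/-- The `x`-factor of Murphy's interpolation product. -/
def Pfac (m : ℕ) (T : Fin m → Fin m × Fin m) (x : Fin m) : GA m :=
  ((((Finset.Icc (-((x : ℕ) : ℤ)) ((x : ℕ) : ℤ)).erase (ct m T x)).sort (· ≤ ·)).map fun c =>
    (((ct m T x - c : ℤ) : ℂ))⁻¹ •
      (JM m x - ((c : ℤ) : ℂ) • (1 : GA m))).prod

lemma eTg_eq (T : Fin m → Fin m × Fin m) :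
    eTg m T = ((List.finRange m).map (Pfac m T)).prod := rfl

lemma smul_list_prod (a : ℤ → ℂ) (F : ℤ → GA m) (l : List ℤ) :
    (l.map fun c => a c • F c).prod = (l.map a).prod • (l.map F).prod := by
  induction l with
  | nil => simp
  | cons c l ih =>
    simp only [List.map_cons, List.prod_cons, ih]
    rw [smul_mul_assoc, mul_smul_comm, smul_smul]

lemma Pfac_eq_smul_qL (T : Fin m → Fin m × Fin m) (x : Fin m) :
    Pfac m T x = ((((Finset.Icc (-((x : ℕ) : ℤ)) ((x : ℕ) : ℤ)).erase (ct m T x)).sort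
        (· ≤ ·)).map fun c => (((ct m T x - c : ℤ) : ℂ))⁻¹).prod •
      qL ((Finset.Icc (-((x : ℕ) : ℤ)) ((x : ℕ) : ℤ)).erase (ct m T x)) (JM m x) := by
  rw [Pfac, smul_list_prod]
  rfl

lemma hook_bound (T : Fin m → Fin m × Fin m) (hT : IsSYT m T) (x : Fin m) :
    ((T x).1 : ℕ) + ((T x).2 : ℕ) ≤ (x : ℕ) := by
  classical
  set f : Fin m → ℕ × ℕ := fun k => (((T k).1 : ℕ), ((T k).2 : ℕ)) with hf
  set r := ((T x).1 : ℕ) with hr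
  set c := ((T x).2 : ℕ) with hc
  have hmem1 : ∀ i : ℕ, i ≤ r → (i, c) ∈ (Finset.Iic x).image f := by
    intro i hi
    have hi' : i < m := lt_of_le_of_lt hi (T x).1.isLt
    obtain ⟨k, hk, hTk⟩ := hT.2 x (⟨i, hi'⟩, (T x).2) (by rw [Fin.le_def]; exact hi) le_rfl
    refine Finset.mem_image.2 ⟨k, Finset.mem_Iic.2 hk, ?_⟩
    rw [hf]; dsimp only; rw [hTk]
  have hmem2 : ∀ i : ℕ, i < c → (r, i) ∈ (Finset.Iic x).image f := by
    intro i hi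
    have hi' : i < m := lt_of_lt_of_le hi (le_of_lt (T x).2.isLt)
    obtain ⟨k, hk, hTk⟩ := hT.2 x ((T x).1, ⟨i, hi'⟩) le_rfl (by rw [Fin.le_def]; exact le_of_lt hi)
    refine Finset.mem_image.2 ⟨k, Finset.mem_Iic.2 hk, ?_⟩
    rw [hf]; dsimp only; rw [hTk]
  set S1 : Finset (ℕ × ℕ) := (Finset.range (r+1)).image (fun i => (i, c)) with hS1
  set S2 : Finset (ℕ × ℕ) := (Finset.range c).image (fun i => (r, i)) with hS2
  have hsub : S1 ∪ S2 ⊆ (Finset.Iic x).image f := by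
    intro p hp
    rcases Finset.mem_union.1 hp with hp | hp
    · obtain ⟨i, hi, rfl⟩ := Finset.mem_image.1 hp
      exact hmem1 i (Nat.lt_succ_iff.1 (Finset.mem_range.1 hi))
    · obtain ⟨i, hi, rfl⟩ := Finset.mem_image.1 hp
      exact hmem2 i (Finset.mem_range.1 hi)
  have hdisj : Disjoint S1 S2 := by
    rw [Finset.disjoint_left]
    rintro p hp1 hp2
    obtain ⟨i, _, rfl⟩ := Finset.mem_image.1 hp1
    obtain ⟨i', hi', heq⟩ := Finset.mem_image.1 hp2
    have : i' = c := (Prod.mk.injEq _ _ _ _ ▸ heq).2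
    rw [this] at hi'
    exact lt_irrefl c (Finset.mem_range.1 hi')
  have hcard1 : S1.card = r + 1 := by
    rw [hS1, Finset.card_image_of_injective _ (fun a b h => (Prod.mk.injEq _ _ _ _ ▸ h).1),
      Finset.card_range]
  have hcard2 : S2.card = c := by
    rw [hS2, Finset.card_image_of_injective _ (fun a b h => (Prod.mk.injEq _ _ _ _ ▸ h).2),
      Finset.card_range]
  have h1 : (S1 ∪ S2).card = r + 1 + c := by
    rw [Finset.card_union_of_disjoint hdisj, hcard1, hcard2]
  have h2 : (S1 ∪ S2).card ≤ (Finset.Iic x).card :=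
    le_trans (Finset.card_le_card hsub) (Finset.card_image_le)
  rw [h1, Fin.card_Iic] at h2
  omega

lemma ct_mem_Icc (T : Fin m → Fin m × Fin m) (hT : IsSYT m T) (x : Fin m) :
    ct m T x ∈ Finset.Icc (-((x : ℕ) : ℤ)) ((x : ℕ) : ℤ) := by
  have := hook_bound T hT x
  rw [ct, Finset.mem_Icc]
  omega

lemma JM_mul_Pfac (T : Fin m → Fin m × Fin m) (hT : IsSYT m T) (x : Fin m) :
    JM m x * Pfac m T x = ((ct m T x : ℤ) : ℂ) • Pfac m T x := by
  have key : (JM m x - ((ct m T x : ℤ) : ℂ) • 1) * Pfac m T x = 0 := by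
    rw [Pfac_eq_smul_qL, mul_smul_comm, ← qL_insert (Finset.notMem_erase _ _) (JM m x),
      Finset.insert_erase (ct_mem_Icc T hT x), qL_JM, smul_zero]
  rw [sub_mul, smul_mul_assoc, one_mul] at key
  exact sub_eq_zero.1 key

lemma JM_commute_Pfac (x y : Fin m) (T : Fin m → Fin m × Fin m) :
    Commute (JM m x) (Pfac m T y) := by
  refine Commute.list_prod_right _ _ ?_
  intro z hz
  obtain ⟨c, _, rfl⟩ := List.mem_map.1 hz
  exact (JM_commute_factor x y _).smul_right _

lemma JM_mul_prod_list (T : Fin m → Fin m × Fin m) (hT : IsSYT m T) (x : Fin m)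
    (l : List (Fin m)) (hx : x ∈ l) :
    JM m x * (l.map (Pfac m T)).prod = ((ct m T x : ℤ) : ℂ) • (l.map (Pfac m T)).prod := by
  induction l with
  | nil => simp at hx
  | cons y l ih =>
    rw [List.map_cons, List.prod_cons, ← mul_assoc]
    by_cases hxy : x = y
    · subst hxy
      rw [JM_mul_Pfac T hT, smul_mul_assoc]
    · have hx' : x ∈ l := by
        rcases List.mem_cons.1 hx with h | h
        · exact absurd h hxy
        · exact h
      rw [(JM_commute_Pfac x y T).eq, mul_assoc, ih hx', mul_smul_comm]

theorem JM_mul_eTg (T : Fin m → Fin m × Fin m) (hT : IsSYT m T) (x : Fin m) :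
    JM m x * eTg m T = ((ct m T x : ℤ) : ℂ) • eTg m T := by
  rw [eTg_eq]
  exact JM_mul_prod_list T hT x _ (List.mem_finRange x)

lemma JM_pow_mul_eTg (T : Fin m → Fin m × Fin m) (hT : IsSYT m T) (x : Fin m) (p : ℕ) :
    JM m x ^ p * eTg m T = (((ct m T x : ℤ) : ℂ)) ^ p • eTg m T := by
  induction p with
  | zero => simp
  | succ p ih =>
    rw [pow_succ', mul_assoc, ih, mul_smul_comm, JM_mul_eTg T hT x, smul_smul, ← pow_succ]

end Sec4

section Sec5

lemma mon_mul_eTg {n : ℕ} (T : Fin (n+2) → Fin (n+2) × Fin (n+2)) (hT : IsSYT (n+2) T)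
    (d : Fin (n+1) → ℕ) (l : List (Fin (n+1))) :
    ((l.map fun v => JM (n+2) v.succ ^ d v).prod) * eTg (n+2) T
      = ((l.map fun v => ((ct (n+2) T v.succ : ℤ) : ℂ) ^ d v).prod) • eTg (n+2) T := by
  induction l with
  | nil => simp
  | cons y l ih =>
    rw [List.map_cons, List.prod_cons, List.map_cons, List.prod_cons, mul_assoc, ih,
      mul_smul_comm, JM_pow_mul_eTg T hT, smul_smul, mul_comm]

lemma polyEval_mul_eTg {n : ℕ} (f : MvPolynomial (Fin (n+1)) ℂ)
    (T : Fin (n+2) → Fin (n+2) × Fin (n+2)) (hT : IsSYT (n+2) T) :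
    polyEval f (fun v : Fin (n+1) => JM (n+2) v.succ) * eTg (n+2) T
      = (MvPolynomial.eval fun v : Fin (n+1) => ((ct (n+2) T v.succ : ℤ) : ℂ)) f •
        eTg (n+2) T := by
  rw [polyEval, Finset.sum_mul, MvPolynomial.eval_eq', Finset.sum_smul]
  refine Finset.sum_congr rfl fun d _ => ?_
  rw [smul_mul_assoc, mon_mul_eTg T hT (fun v => d v) (List.finRange (n+1)), smul_smul,
    Fin.prod_univ_def]

end Sec5

section Sec6

variable {m : ℕ}

/-- Contents of one row of length `L` at row index `r`. -/
def rowM (L r : ℕ) : Multiset ℤ := ↑((List.range L).map fun c => (c : ℤ) - (r : ℤ))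

/-- Contents of a list of row lengths starting at row index `r`. -/
def CFL : ℕ → List ℕ → Multiset ℤ
  | _, [] => 0
  | r, a :: t => rowM a r + CFL (r + 1) t

lemma flatten_enumFrom (l : List ℕ) : ∀ r : ℕ,
    ((((l.zipIdx r).map fun p => (List.range p.1).map fun c => (c : ℤ) - (p.2 : ℤ)).flatten :
      List ℤ) : Multiset ℤ) = CFL r l := by
  induction l with
  | nil => intro r; rfl
  | cons a t ih =>
    intro r
    rw [List.zipIdx_cons, List.map_cons, List.flatten_cons, CFL, ← ih (r + 1), rowM,
      ← Multiset.coe_add]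

lemma contentsM_eq_CFL (lam : Multiset ℕ) :
    contentsM lam = CFL 0 ((lam.sort (· ≤ ·)).reverse) := by
  rw [contentsM, ← flatten_enumFrom _ 0]

lemma descL_eq (lam : Multiset ℕ) (l : List ℕ) (hperm : (↑l : Multiset ℕ) = lam)
    (hsort : l.Pairwise (· ≥ ·)) : (lam.sort (· ≤ ·)).reverse = l := by
  have hanti : IsAntisymm ℕ (· ≥ ·) := ⟨fun a b h1 h2 => le_antisymm h2 h1⟩
  refine List.Perm.eq_of_pairwise (le := fun a b : ℕ => a ≥ b)
    (fun a b _ _ h1 h2 => le_antisymm h2 h1) ?_ hsort ?_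
  · rw [List.pairwise_reverse]
    exact List.Pairwise.imp (fun h => h) (Multiset.pairwise_sort lam (· ≤ ·))
  · rw [← Multiset.coe_eq_coe, Multiset.coe_reverse, Multiset.sort_eq, hperm]

lemma pairwise_ge_map_range (f : ℕ → ℕ) (hf : ∀ a b : ℕ, a ≤ b → f b ≤ f a) (R : ℕ) :
    ((List.range R).map f).Pairwise (· ≥ ·) := by
  rw [List.pairwise_map]
  exact (List.pairwise_lt_range (n := R)).imp (fun h => hf _ _ (le_of_lt h))

lemma CFL_append (l l' : List ℕ) : ∀ r, CFL r (l ++ l') = CFL r l + CFL (r + l.length) l' := by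
  induction l with
  | nil => intro r; simp [CFL]
  | cons a t ih =>
    intro r
    rw [List.cons_append, CFL, CFL, ih (r + 1), List.length_cons,
      show r + (t.length + 1) = r + 1 + t.length from by omega]
    abel

lemma CFL_map_range (f : ℕ → ℕ) (R : ℕ) :
    CFL 0 ((List.range R).map f) = ∑ r ∈ Finset.range R, rowM (f r) r := by
  induction R with
  | zero => simp [CFL]
  | succ R ih =>
    rw [List.range_succ, List.map_append, CFL_append, ih, Finset.sum_range_succ]
    congr 1
    simp [CFL]

lemma rowM_succ (L r : ℕ) : rowM (L + 1) r = rowM L r + {(L : ℤ) - (r : ℤ)} := by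
  rw [rowM, rowM, List.range_succ]
  simp [← Multiset.coe_add]

lemma rowM_zero (r : ℕ) : rowM 0 r = 0 := rfl

lemma rowM_one (r : ℕ) : rowM 1 r = {(0 : ℤ) - (r : ℤ)} := by
  rw [show (1 : ℕ) = 0 + 1 from rfl, rowM_succ, rowM_zero, zero_add]
  norm_num

lemma dcl_eq_range (s : Finset ℕ) (h : ∀ a b : ℕ, a ≤ b → b ∈ s → a ∈ s) :
    s = Finset.range s.card := by
  have hsub : s ⊆ Finset.range s.card := by
    intro a ha
    rw [Finset.mem_range]
    by_contra hc
    push_neg at hc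
    have hsub2 : Finset.range (a + 1) ⊆ s := by
      intro i hi
      exact h i a (Nat.lt_succ_iff.1 (Finset.mem_range.1 hi)) ha
    have := Finset.card_le_card hsub2
    rw [Finset.card_range] at this
    omega
  exact Finset.eq_of_subset_of_card_le hsub (by rw [Finset.card_range])

lemma map_val_eq_sum {α β : Type*} (s : Finset α) (φ : α → β) :
    s.val.map φ = ∑ x ∈ s, ({φ x} : Multiset β) := by
  have h : ∑ x ∈ s, ({φ x} : Multiset β)
      = ((s.val.map φ).map (fun b => ({b} : Multiset β))).sum := by
    rw [Multiset.map_map]; rfl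
  rw [h, Multiset.sum_map_singleton]

lemma map_val_partition {α β : Type*} (s : Finset α) (φ : α → β) (idx : α → ℕ) (N : ℕ)
    (hidx : ∀ a ∈ s, idx a < N) :
    s.val.map φ = ∑ r ∈ Finset.range N, (s.filter fun a => idx a = r).val.map φ := by
  rw [map_val_eq_sum]
  rw [← Finset.sum_fiberwise_of_maps_to (fun a ha => Finset.mem_range.2 (hidx a ha))
    (fun a => ({φ a} : Multiset β))]
  exact Finset.sum_congr rfl fun r _ => (map_val_eq_sum _ _).symm

-- tableau lemmas
variable (T : Fin m → Fin m × Fin m)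

lemma col_injOn (hT : IsSYT m T) (r : ℕ) :
    Set.InjOn (fun k => ((T k).2 : ℕ)) (Finset.univ.filter fun k => ((T k).1 : ℕ) = r) := by
  intro a ha b hb hab
  simp only [Finset.coe_filter, Set.mem_setOf_eq] at ha hb
  refine hT.1 (Prod.ext (Fin.ext ?_) (Fin.ext ?_))
  · rw [ha.2, hb.2]
  · exact hab

lemma colFiber_image (hT : IsSYT m T) (r : ℕ) :
    (Finset.univ.filter fun k => ((T k).1 : ℕ) = r).image (fun k => ((T k).2 : ℕ))
      = Finset.range (rowLen m T r) := by
  set F := Finset.univ.filter fun k => ((T k).1 : ℕ) = r with hF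
  have hcard : (F.image fun k => ((T k).2 : ℕ)).card = rowLen m T r := by
    rw [Finset.card_image_of_injOn (col_injOn T hT r)]
    rfl
  have hdc : ∀ a b : ℕ, a ≤ b → b ∈ F.image (fun k => ((T k).2 : ℕ)) →
      a ∈ F.image (fun k => ((T k).2 : ℕ)) := by
    intro a b hab hb
    obtain ⟨k, hk, hcol⟩ := Finset.mem_image.1 hb
    have hkr : ((T k).1 : ℕ) = r := (Finset.mem_filter.1 hk).2
    have ha' : a < m := lt_of_le_of_lt (hcol ▸ hab) (T k).2.isLt
    obtain ⟨k', _, hTk'⟩ := hT.2 k ((T k).1, ⟨a, ha'⟩) le_rfl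
      (by rw [Fin.le_def]; exact hcol ▸ hab)
    refine Finset.mem_image.2 ⟨k', Finset.mem_filter.2 ⟨Finset.mem_univ _, ?_⟩, ?_⟩
    · rw [hTk']; exact hkr
    · rw [hTk']
  rw [← hcard]
  exact dcl_eq_range _ hdc

lemma occ_iff (hT : IsSYT m T) (r c : ℕ) :
    (∃ k, ((T k).1 : ℕ) = r ∧ ((T k).2 : ℕ) = c) ↔ c < rowLen m T r := by
  rw [← Finset.mem_range, ← colFiber_image T hT r, Finset.mem_image]
  constructor
  · rintro ⟨k, h1, h2⟩
    exact ⟨k, Finset.mem_filter.2 ⟨Finset.mem_univ _, h1⟩, h2⟩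
  · rintro ⟨k, hk, h2⟩
    exact ⟨k, (Finset.mem_filter.1 hk).2, h2⟩

lemma rowLen_anti (hT : IsSYT m T) : ∀ r r' : ℕ, r' ≤ r → rowLen m T r ≤ rowLen m T r' := by
  intro r r' hle
  rcases Nat.eq_zero_or_pos (rowLen m T r) with h0 | h0
  · omega
  have hlt : ∀ c, c < rowLen m T r → c < rowLen m T r' := by
    intro c hc
    obtain ⟨k, hkr, hkc⟩ := (occ_iff T hT r c).2 hc
    have hr'm : r' < m := lt_of_le_of_lt hle (hkr ▸ (T k).1.isLt)
    obtain ⟨k', _, hTk'⟩ := hT.2 k (⟨r', hr'm⟩, (T k).2)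
      (by rw [Fin.le_def]; exact hkr ▸ hle) le_rfl
    refine (occ_iff T hT r' c).1 ⟨k', ?_, ?_⟩
    · rw [hTk']
    · rw [hTk']; exact hkc
  have := hlt (rowLen m T r - 1) (by omega)
  omega

lemma rowLen_zero_of_ge (r : ℕ) (hr : m ≤ r) : rowLen m T r = 0 := by
  rw [rowLen]
  convert Finset.card_empty
  ext k
  simp only [Finset.mem_filter, Finset.mem_univ, true_and, Finset.notMem_empty, iff_false]
  intro h
  have := (T k).1.isLt
  omega

lemma shape_pos : ∀ a ∈ shapeOf m T, 0 < a := by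
  intro a ha
  rw [shapeOf] at ha
  exact (Multiset.mem_filter.1 ha).2

end Sec6

section Sec7

variable {m : ℕ} (T : Fin m → Fin m × Fin m)

lemma rowM_eq (L r : ℕ) :
    rowM L r = (Multiset.range L).map (fun c : ℕ => (c : ℤ) - (r : ℤ)) := by
  induction L with
  | zero => rfl
  | succ L ih =>
    rw [rowM_succ, ih, Multiset.range_succ, Multiset.map_cons, add_comm,
      Multiset.singleton_add]

lemma fiber_contents (hT : IsSYT m T) (r : ℕ) :
    (Finset.univ.filter fun k => ((T k).1 : ℕ) = r).val.map (ct m T)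
      = rowM (rowLen m T r) r := by
  set F := Finset.univ.filter fun k : Fin m => ((T k).1 : ℕ) = r with hF
  have h1 : (F.image fun k => ((T k).2 : ℕ)).val = F.val.map (fun k => ((T k).2 : ℕ)) :=
    Finset.image_val_of_injOn (col_injOn T hT r)
  have h3 : F.val.map (ct m T)
      = (F.val.map (fun k => ((T k).2 : ℕ))).map (fun c : ℕ => (c : ℤ) - (r : ℤ)) := by
    rw [Multiset.map_map]
    refine Multiset.map_congr rfl ?_
    intro k hk
    have hkr : ((T k).1 : ℕ) = r :=
      (Finset.mem_filter.1 (show k ∈ Finset.univ.filter fun k : Fin m => ((T k).1 : ℕ) = r from hk)).2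
    simp only [ct, Function.comp_apply]
    congr 1
    exact_mod_cast hkr
  rw [h3, ← h1, colFiber_image T hT r, Finset.range_val, rowM_eq]

/-- Number of (positive-length) rows. -/
def Rpos (m : ℕ) (T : Fin m → Fin m × Fin m) : ℕ :=
  ((Finset.range m).filter fun r => 0 < rowLen m T r).card

lemma filter_pos_eq (hT : IsSYT m T) :
    (Finset.range m).filter (fun r => 0 < rowLen m T r) = Finset.range (Rpos m T) := by
  apply dcl_eq_range
  intro a b hab hb
  have hb' := Finset.mem_filter.1 hb
  refine Finset.mem_filter.2 ⟨Finset.mem_range.2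
    (lt_of_le_of_lt hab (Finset.mem_range.1 hb'.1)), ?_⟩
  exact lt_of_lt_of_le hb'.2 (rowLen_anti T hT b a hab)

lemma Rpos_le : Rpos m T ≤ m :=
  le_trans (Finset.card_le_card (Finset.filter_subset _ _)) (le_of_eq (Finset.card_range m))

lemma rowLen_pos_of_lt_Rpos (hT : IsSYT m T) (r : ℕ) (hr : r < Rpos m T) :
    0 < rowLen m T r := by
  have h1 : r ∈ Finset.range (Rpos m T) := Finset.mem_range.2 hr
  rw [← filter_pos_eq T hT] at h1
  exact (Finset.mem_filter.1 h1).2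

lemma lt_Rpos_of_pos (hT : IsSYT m T) (r : ℕ) (hrm : r < m) (h : 0 < rowLen m T r) :
    r < Rpos m T := by
  have : r ∈ Finset.range (Rpos m T) :=
    filter_pos_eq T hT ▸ Finset.mem_filter.2 ⟨Finset.mem_range.2 hrm, h⟩
  exact Finset.mem_range.1 this

lemma rowLen_eq_zero_of_Rpos_le (hT : IsSYT m T) (r : ℕ) (hr : Rpos m T ≤ r) :
    rowLen m T r = 0 := by
  by_contra h
  rcases lt_or_ge r m with hrm | hrm
  · have := lt_Rpos_of_pos T hT r hrm (Nat.pos_of_ne_zero h)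
    omega
  · exact h (rowLen_zero_of_ge T r hrm)

lemma shape_eq (hT : IsSYT m T) :
    shapeOf m T = (Multiset.range (Rpos m T)).map (rowLen m T) := by
  rw [shapeOf, Multiset.filter_map]
  have : Multiset.filter ((fun a => 0 < a) ∘ rowLen m T) (Multiset.range m)
      = ((Finset.range m).filter (fun r => 0 < rowLen m T r)).val := by
    rw [Finset.filter_val, Finset.range_val]
    rfl
  rw [this, filter_pos_eq T hT, Finset.range_val]

lemma descL_shape (hT : IsSYT m T) :
    ((shapeOf m T).sort (· ≤ ·)).reverse = (List.range (Rpos m T)).map (rowLen m T) := by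
  apply descL_eq
  · rw [shape_eq T hT, ← Multiset.map_coe]
    rfl
  · exact pairwise_ge_map_range _ (fun a b hab => rowLen_anti T hT b a hab) _

lemma total_contents (hT : IsSYT m T) :
    (Finset.univ.val.map (ct m T) : Multiset ℤ) = contentsM (shapeOf m T) := by
  rw [contentsM_eq_CFL, descL_shape T hT, CFL_map_range]
  rw [map_val_partition Finset.univ (ct m T) (fun k => ((T k).1 : ℕ)) m
    (fun a _ => (T a).1.isLt)]
  rw [← Finset.sum_subset (Finset.range_subset_range.2 (Rpos_le T)) ?_]
  · exact Finset.sum_congr rfl fun r _ => fiber_contents T hT r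
  · intro r _ hrR
    rw [fiber_contents T hT r,
      rowLen_eq_zero_of_Rpos_le T hT r (by simpa using Finset.mem_range.not.1 hrR), rowM_zero]

lemma erase_add_singleton {α : Type*} [DecidableEq α] (X : Multiset α) (a : α) :
    (X + {a}).erase a = X := by
  rw [add_comm, Multiset.singleton_add, Multiset.erase_cons_head]

end Sec7

section Sec8

variable {n : ℕ} (T : Fin (n+2) → Fin (n+2) × Fin (n+2))

lemma last_col (hT : IsSYT (n+2) T) :
    ((T (Fin.last (n+1))).2 : ℕ) + 1 = rowLen (n+2) T ((T (Fin.last (n+1))).1 : ℕ) := by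
  set r := ((T (Fin.last (n+1))).1 : ℕ) with hr
  set c := ((T (Fin.last (n+1))).2 : ℕ) with hc
  have hocc : c < rowLen (n+2) T r :=
    (occ_iff T hT r c).1 ⟨Fin.last (n+1), rfl, rfl⟩
  have hnot : ¬ (c + 1 < rowLen (n+2) T r) := by
    intro h
    obtain ⟨k, hk1, hk2⟩ := (occ_iff T hT r (c + 1)).2 h
    obtain ⟨k', hk'le, hTk'⟩ := hT.2 k ((T k).1, (T (Fin.last (n+1))).2) le_rfl
      (by rw [Fin.le_def, ← hc, hk2]; omega)
    have heq : T k' = T (Fin.last (n+1)) := by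
      rw [hTk']
      refine Prod.ext (Fin.ext ?_) rfl
      rw [hk1]
    have hk'last : k' = Fin.last (n+1) := hT.1 heq
    have hklast : k = Fin.last (n+1) := le_antisymm (Fin.le_last k) (hk'last ▸ hk'le)
    rw [hklast] at hk2
    omega
  omega

lemma rowLen_succ_row_last (hT : IsSYT (n+2) T) :
    rowLen (n+2) T (((T (Fin.last (n+1))).1 : ℕ) + 1) ≤ ((T (Fin.last (n+1))).2 : ℕ) := by
  set r := ((T (Fin.last (n+1))).1 : ℕ) with hr
  set c := ((T (Fin.last (n+1))).2 : ℕ) with hc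
  by_contra h
  push_neg at h
  obtain ⟨k, hk1, hk2⟩ := (occ_iff T hT (r + 1) c).2 h
  obtain ⟨k', hk'le, hTk'⟩ := hT.2 k ((T (Fin.last (n+1))).1, (T k).2)
    (by rw [Fin.le_def, ← hr, hk1]; omega) le_rfl
  have heq : T k' = T (Fin.last (n+1)) := by
    rw [hTk']
    refine Prod.ext rfl (Fin.ext ?_)
    rw [hk2]
  have hk'last : k' = Fin.last (n+1) := hT.1 heq
  have hklast : k = Fin.last (n+1) := le_antisymm (Fin.le_last k) (hk'last ▸ hk'le)
  rw [hklast] at hk1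
  omega

lemma count_ge (hT : IsSYT (n+2) T) (j : ℕ)
    (hj : rowLen (n+2) T ((T (Fin.last (n+1))).1 : ℕ) = j) :
    (Finset.range (n+2)).filter (fun r' => j ≤ rowLen (n+2) T r')
      = Finset.range (((T (Fin.last (n+1))).1 : ℕ) + 1) := by
  have hcol := last_col T hT
  have hsucc := rowLen_succ_row_last T hT
  have hrm : ((T (Fin.last (n+1))).1 : ℕ) < n + 2 := (T (Fin.last (n+1))).1.isLt
  ext r'
  simp only [Finset.mem_filter, Finset.mem_range]
  constructor
  · rintro ⟨hr'm, hge⟩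
    by_contra hcon
    push_neg at hcon
    have h1 : rowLen (n+2) T r' ≤ rowLen (n+2) T (((T (Fin.last (n+1))).1 : ℕ) + 1) :=
      rowLen_anti T hT r' _ (by omega)
    omega
  · intro hle
    refine ⟨by omega, ?_⟩
    have := rowLen_anti T hT ((T (Fin.last (n+1))).1 : ℕ) r' (by omega)
    omega

lemma mu_count (hT : IsSYT (n+2) T) (j : ℕ) (hj1 : 1 ≤ j)
    (hj : rowLen (n+2) T ((T (Fin.last (n+1))).1 : ℕ) = j) :
    Multiset.card ((shapeOf (n+2) T).filter fun k => j ≤ k)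
      = ((T (Fin.last (n+1))).1 : ℕ) + 1 := by
  rw [shapeOf, Multiset.filter_filter]
  have h1 : Multiset.filter (fun a => j ≤ a ∧ 0 < a)
        ((Multiset.range (n+2)).map (rowLen (n+2) T))
      = Multiset.filter (fun a => j ≤ a) ((Multiset.range (n+2)).map (rowLen (n+2) T)) := by
    refine Multiset.filter_congr ?_
    intro a _
    constructor
    · exact fun h => h.1
    · exact fun h => ⟨h, by omega⟩
  rw [h1, Multiset.filter_map]
  rw [Multiset.card_map]
  have h2 : Multiset.filter ((fun a => j ≤ a) ∘ rowLen (n+2) T) (Multiset.range (n+2))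
      = ((Finset.range (n+2)).filter (fun r' => j ≤ rowLen (n+2) T r')).val := by
    rw [Finset.filter_val, Finset.range_val]
    rfl
  rw [h2, count_ge T hT j hj]
  rw [Finset.range_val, Multiset.card_range]

lemma ct_last (hT : IsSYT (n+2) T) (j : ℕ) (hj1 : 1 ≤ j)
    (hj : rowLen (n+2) T ((T (Fin.last (n+1))).1 : ℕ) = j) :
    ct (n+2) T (Fin.last (n+1)) = cCorner (shapeOf (n+2) T) j := by
  rw [ct, cCorner, mu_count T hT j hj1 hj]
  have hcj : ((T (Fin.last (n+1))).2 : ℕ) + 1 = j := by rw [last_col T hT, hj]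
  have h1 : ((T (Fin.last (n+1))).2 : ℤ) = (((T (Fin.last (n+1))).2 : ℕ) : ℤ) := rfl
  have h2 : ((T (Fin.last (n+1))).1 : ℤ) = (((T (Fin.last (n+1))).1 : ℕ) : ℤ) := rfl
  rw [h1, h2]
  omega

lemma ct_zero' (hT : IsSYT (n+2) T) : ct (n+2) T 0 = 0 := by
  have hb := hook_bound T hT 0
  have h0 : ((0 : Fin (n+2)) : ℕ) = 0 := rfl
  rw [h0] at hb
  rw [ct]
  have h1 : ((T 0).2 : ℤ) = (((T 0).2 : ℕ) : ℤ) := rfl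
  have h2 : ((T 0).1 : ℤ) = (((T 0).1 : ℕ) : ℤ) := rfl
  rw [h1, h2]
  omega

lemma contents_iminus (hT : IsSYT (n+2) T) (j : ℕ)
    (hj : rowLen (n+2) T ((T (Fin.last (n+1))).1 : ℕ) = j) :
    contentsM (iminus (shapeOf (n+2) T) j)
      = (contentsM (shapeOf (n+2) T)).erase (cCorner (shapeOf (n+2) T) j) := by
  set mu := shapeOf (n+2) T with hmu
  set r := ((T (Fin.last (n+1))).1 : ℕ) with hrdef
  set c := ((T (Fin.last (n+1))).2 : ℕ) with hcdef
  set R := Rpos (n+2) T with hRdef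
  have hcj : c + 1 = j := by rw [last_col T hT, hj]
  have hj1 : 1 ≤ j := by omega
  have hrm : r < n + 2 := (T (Fin.last (n+1))).1.isLt
  have hrR : r < R := lt_Rpos_of_pos T hT r hrm (by omega)
  have hsucc : rowLen (n+2) T (r + 1) ≤ c := rowLen_succ_row_last T hT
  have hcorner : cCorner mu j = ((j : ℤ) - 1) - (r : ℤ) := by
    rw [cCorner, mu_count T hT j hj1 hj]
    push_cast
    ring
  by_cases hje : j = 1
  · -- the removed row has length 1 and is the last row
    subst hje
    have hc0 : c = 0 := by omega
    have hR1 : R = r + 1 := by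
      have h1 : rowLen (n+2) T (r + 1) = 0 := by omega
      have h2 : ¬ (r + 1 < R) := fun h => by
        have := rowLen_pos_of_lt_Rpos T hT (r + 1) h; omega
      omega
    have hmusplit : mu = ↑((List.range r).map (rowLen (n+2) T)) + {1} := by
      rw [hmu, shape_eq T hT, ← hRdef, hR1, Multiset.range_succ, Multiset.map_cons, hj]
      conv_rhs => rw [add_comm, Multiset.singleton_add]
      congr 1
    have hiv : iminus mu 1 = ↑((List.range r).map (rowLen (n+2) T)) := by
      rw [iminus]
      have h3 : (1 - 1) ::ₘ mu.erase 1 = (0 : ℕ) ::ₘ mu.erase 1 := rfl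
      rw [h3, Multiset.filter_cons_of_neg _ (by omega)]
      rw [Multiset.filter_eq_self.2 (fun a ha =>
        shape_pos T a (Multiset.mem_of_mem_erase ha))]
      rw [← hmu, hmusplit, erase_add_singleton]
    have hdesc' : ((iminus mu 1).sort (· ≤ ·)).reverse
        = (List.range r).map (rowLen (n+2) T) := by
      apply descL_eq _ _ hiv.symm
      exact pairwise_ge_map_range _ (fun a b hab => rowLen_anti T hT b a hab) _
    rw [contentsM_eq_CFL, hdesc', contentsM_eq_CFL, descL_shape T hT, ← hRdef, hR1]
    rw [List.range_succ, List.map_append, CFL_append, CFL_map_range]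
    have hlen : ((List.range r).map (rowLen (n+2) T)).length = r := by simp
    rw [hlen]
    have hCFL1 : CFL (0 + r) (List.map (rowLen (n+2) T) [r]) = {(0 : ℤ) - (r : ℤ)} := by
      rw [zero_add, List.map_singleton, CFL, CFL, hj, rowM_one, add_zero]
    rw [hCFL1]
    have hcor : cCorner mu 1 = (0 : ℤ) - (r : ℤ) := by rw [hcorner]; ring
    rw [hcor, erase_add_singleton]
  · -- j ≥ 2 : decrement the last row of length j
    have hj2 : 2 ≤ j := by omega
    set f' : ℕ → ℕ := fun r' => if r' = r then j - 1 else rowLen (n+2) T r' with hf'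
    have hant' : ∀ a b : ℕ, a ≤ b → f' b ≤ f' a := by
      intro a b hab
      rw [hf']
      dsimp only
      split_ifs with h1 h2 h3
      · omega
      · -- b = r, a ≠ r so a < r
        have h4 : rowLen (n+2) T r ≤ rowLen (n+2) T a := rowLen_anti T hT r a (by omega)
        omega
      · -- b ≠ r, a = r, so r < b hence r+1 ≤ b
        have h4 : rowLen (n+2) T b ≤ rowLen (n+2) T (r + 1) :=
          rowLen_anti T hT b (r + 1) (by omega)
        omega
      · exact rowLen_anti T hT b a hab
    have hrmem : r ∈ Multiset.range R := by
      rw [Multiset.mem_range]; exact hrR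
    have hmusplit : mu = j ::ₘ (((Multiset.range R).erase r).map (rowLen (n+2) T)) := by
      have hstep : Multiset.map (rowLen (n+2) T) (Multiset.range R)
          = j ::ₘ Multiset.map (rowLen (n+2) T) ((Multiset.range R).erase r) := by
        conv_lhs => rw [← Multiset.cons_erase hrmem]
        rw [Multiset.map_cons, hj]
      rw [hmu, shape_eq T hT, ← hRdef, hstep]
    have hmapf' : (Multiset.range R).map f'
        = (j - 1) ::ₘ (((Multiset.range R).erase r).map (rowLen (n+2) T)) := by
      conv_lhs => rw [← Multiset.cons_erase hrmem]
      rw [Multiset.map_cons]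
      congr 1
      · rw [hf']; simp
      · refine Multiset.map_congr rfl ?_
        intro a ha
        have hane : a ≠ r :=
          ((Multiset.nodup_range R).mem_erase_iff.1 ha).1
        rw [hf']
        simp [hane]
    have hiv : iminus mu j = (Multiset.range R).map f' := by
      rw [iminus, hmusplit, Multiset.erase_cons_head, hmapf']
      refine Multiset.filter_eq_self.2 ?_
      intro a ha
      rcases Multiset.mem_cons.1 ha with h | h
      · omega
      · obtain ⟨b, hb, rfl⟩ := Multiset.mem_map.1 h
        have : 0 < rowLen (n+2) T b := by
          refine rowLen_pos_of_lt_Rpos T hT b ?_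
          have := Multiset.mem_of_mem_erase hb
          rwa [Multiset.mem_range] at this
        exact this
    have hdesc' : ((iminus mu j).sort (· ≤ ·)).reverse = (List.range R).map f' := by
      apply descL_eq
      · rw [hiv, ← Multiset.map_coe]; rfl
      · exact pairwise_ge_map_range f' hant' R
    have hrmemF : r ∈ Finset.range R := Finset.mem_range.2 hrR
    rw [contentsM_eq_CFL, hdesc', contentsM_eq_CFL, descL_shape T hT, ← hRdef,
      CFL_map_range, CFL_map_range]
    rw [← Finset.sum_erase_add _ _ hrmemF, ← Finset.sum_erase_add _ (fun r' => rowM (rowLen (n+2) T r') r') hrmemF]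
    have hsame : ∑ r' ∈ (Finset.range R).erase r, rowM (f' r') r'
        = ∑ r' ∈ (Finset.range R).erase r, rowM (rowLen (n+2) T r') r' := by
      refine Finset.sum_congr rfl ?_
      intro a ha
      have hane : a ≠ r := (Finset.mem_erase.1 ha).1
      rw [hf']
      simp [hane]
    rw [hsame]
    have hfr : f' r = j - 1 := by rw [hf']; simp
    have hrow : rowM (rowLen (n+2) T r) r = rowM (j - 1) r + {((j : ℤ) - 1) - (r : ℤ)} := by
      have h5 : rowLen (n+2) T r = (j - 1) + 1 := by omega
      rw [h5, rowM_succ]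
      have hc2 : ((j - 1 : ℕ) : ℤ) = (j : ℤ) - 1 := by omega
      rw [hc2]
    rw [hfr, hrow, hcorner, ← add_assoc, erase_add_singleton]

end Sec8

section Sec9

lemma exists_perm_of_map_eq {α β : Type*} [DecidableEq α] [DecidableEq β]
    (s : Finset α) : ∀ (f g : α → β), s.val.map f = s.val.map g →
      ∃ σ : Equiv.Perm α, (∀ a, a ∉ s → σ a = a) ∧ (∀ a ∈ s, f (σ a) = g a) := by
  induction s using Finset.induction_on with
  | empty => exact fun f g _ => ⟨1, fun a _ => rfl, fun a ha => absurd ha (by simp)⟩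
  | @insert a t hat ih =>
    intro f g h
    have hga : g a ∈ (insert a t).val.map f := by
      rw [h]
      exact Multiset.mem_map.2 ⟨a, by simp [Finset.insert_val_of_notMem hat], rfl⟩
    obtain ⟨y, hy, hfy⟩ := Multiset.mem_map.1 hga
    have hy' : y ∈ insert a t := hy
    set τ := Equiv.swap a y with hτ
    have hτmem : ∀ z ∈ insert a t, τ z ∈ insert a t := by
      intro z hz
      rcases eq_or_ne z a with rfl | h1
      · rw [hτ, Equiv.swap_apply_left]; exact hy'
      rcases eq_or_ne z y with rfl | h2
      · rw [hτ, Equiv.swap_apply_right]; exact Finset.mem_insert_self _ _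
      · rw [hτ, Equiv.swap_apply_of_ne_of_ne h1 h2]; exact hz
    have himg : Finset.image τ (insert a t) = insert a t := by
      apply Finset.eq_of_subset_of_card_le
      · intro z hz
        obtain ⟨w, hw, rfl⟩ := Finset.mem_image.1 hz
        exact hτmem w hw
      · rw [Finset.card_image_of_injective _ τ.injective]
    have hmap : (insert a t).val.map (f ∘ τ) = (insert a t).val.map f := by
      rw [← Multiset.map_map]
      congr 1
      calc (insert a t).val.map τ = (Finset.image τ (insert a t)).val :=
            (Finset.image_val_of_injOn (τ.injective.injOn)).symm
        _ = (insert a t).val := by rw [himg]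
    have h2 : (insert a t).val.map (f ∘ τ) = (insert a t).val.map g := by rw [hmap, h]
    rw [Finset.insert_val_of_notMem hat, Multiset.map_cons, Multiset.map_cons] at h2
    have hhead : (f ∘ τ) a = g a := by
      simp only [Function.comp_apply, hτ, Equiv.swap_apply_left]
      exact hfy
    rw [hhead] at h2
    have h3 : t.val.map (f ∘ τ) = t.val.map g := (Multiset.cons_inj_right _).1 h2
    obtain ⟨σ', hσ'out, hσ'in⟩ := ih (f ∘ τ) g h3
    refine ⟨τ * σ', ?_, ?_⟩
    · intro z hz
      have hzt : z ∉ t := fun hc => hz (Finset.mem_insert_of_mem hc)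
      have h4 : σ' z = z := hσ'out z hzt
      have h5 : z ≠ a := fun hc => hz (hc ▸ Finset.mem_insert_self a t)
      have h6 : z ≠ y := fun hc => hz (hc ▸ hy')
      rw [Equiv.Perm.mul_apply, h4, hτ, Equiv.swap_apply_of_ne_of_ne h5 h6]
    · intro z hz
      rcases Finset.mem_insert.1 hz with rfl | hzt
      · rw [Equiv.Perm.mul_apply, hσ'out z hat]
        exact hhead
      · rw [Equiv.Perm.mul_apply]
        exact hσ'in z hzt

end Sec9

/-- for an almost symmetric polynomial `f` (symmetric in all variables except the
last, the variables standing for `x_2, …, x_{n+2}` evaluated at `J_2, …, J_{n+2}`), the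
`Z_1`-idempotent `Γ^{μ,j}` is an eigenvector of `f(J_2,…,J_{n+2})` with eigenvalue
`f(c_{j_−(μ)}, c_{μ,j})`, the contents of `j_−(μ)` (other than that of the cell containing `1`)
being assigned to the symmetric variables in any order. -/
theorem stmt15 (n : ℕ) (f : MvPolynomial (Fin (n + 1)) ℂ)
    (hsym : ∀ σ : Equiv.Perm (Fin (n + 1)), σ (Fin.last n) = Fin.last n →
      MvPolynomial.rename σ f = f)
    (mu : Multiset ℕ) (hmu : mu.sum = n + 2) (hmpos : ∀ a ∈ mu, 0 < a)
    (j : ℕ) (hj : j ∈ mu) (g : Fin (n + 1) → ℤ)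
    (hg1 : g (Fin.last n) = cCorner mu j)
    (hg2 : ((Finset.univ.erase (Fin.last n)).val.map g) = (contentsM (iminus mu j)).erase 0) :
    polyEval f (fun v : Fin (n + 1) => JM (n + 2) v.succ) * Gam (n + 1) mu j =
      (MvPolynomial.eval fun v : Fin (n + 1) => ((g v : ℤ) : ℂ)) f • Gam (n + 1) mu j := by
  rw [Gam, Finset.mul_sum, Finset.smul_sum]
  refine Finset.sum_congr rfl fun T hTmem => ?_
  have h1 := Finset.mem_filter.1 hTmem
  have h2 := Finset.mem_filter.1 h1.1
  obtain ⟨hSYT, hshape⟩ := h2.2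
  have hlen : rowLen (n+2) T ((T (Fin.last (n+1))).1 : ℕ) = j := h1.2
  rw [polyEval_mul_eTg f T hSYT]
  congr 1
  have hj1 : 1 ≤ j := hmpos j hj
  have hctlast : ct (n+2) T (Fin.last (n+1)) = cCorner mu j := by
    have := ct_last T hSYT j hj1 hlen
    rwa [hshape] at this
  have hcim : contentsM (iminus mu j) = (contentsM mu).erase (cCorner mu j) := by
    have := contents_iminus T hSYT j hlen
    rwa [hshape] at this
  have htot : Finset.univ.val.map (ct (n+2) T) = contentsM mu := by
    have := total_contents T hSYT
    rwa [hshape] at this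
  have hct0 : ct (n+2) T 0 = 0 := ct_zero' T hSYT
  have e1 : ((Finset.univ.erase (0 : Fin (n+2))).val.map (ct (n+2) T))
      = (contentsM mu).erase 0 := by
    have hv : (Finset.univ : Finset (Fin (n+2))).val
        = (0 : Fin (n+2)) ::ₘ (Finset.univ.erase (0 : Fin (n+2))).val := by
      rw [Finset.erase_val]
      exact (Multiset.cons_erase (Finset.mem_univ (0 : Fin (n+2)))).symm
    rw [← htot, hv, Multiset.map_cons, hct0, Multiset.erase_cons_head]
  have hlast_ne : (Fin.last (n+1)) ≠ (0 : Fin (n+2)) := by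
    intro h
    have := congrArg Fin.val h
    simp [Fin.last] at this
  have hmemL : Fin.last (n+1) ∈ Finset.univ.erase (0 : Fin (n+2)) :=
    Finset.mem_erase.2 ⟨hlast_ne, Finset.mem_univ _⟩
  have e2 : (((Finset.univ.erase (0 : Fin (n+2))).erase (Fin.last (n+1))).val.map
        (ct (n+2) T))
      = ((contentsM mu).erase 0).erase (cCorner mu j) := by
    have hv : (Finset.univ.erase (0 : Fin (n+2))).val
        = Fin.last (n+1) ::ₘ ((Finset.univ.erase (0 : Fin (n+2))).erase
            (Fin.last (n+1))).val := by
      rw [Finset.erase_val ((Finset.univ.erase (0 : Fin (n+2))))]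
      exact (Multiset.cons_erase hmemL).symm
    rw [← e1, hv, Multiset.map_cons, hctlast, Multiset.erase_cons_head]
  have e3 : Finset.image Fin.succ (Finset.univ.erase (Fin.last n))
      = (Finset.univ.erase (0 : Fin (n+2))).erase (Fin.last (n+1)) := by
    ext k
    simp only [Finset.mem_image, Finset.mem_erase, Finset.mem_univ, and_true]
    constructor
    · rintro ⟨v, hv, rfl⟩
      refine ⟨?_, Fin.succ_ne_zero v⟩
      intro hc
      rw [← Fin.succ_last] at hc
      exact hv (Fin.succ_injective _ hc)
    · rintro ⟨hne_last, hne0⟩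
      refine ⟨k.pred hne0, ?_, Fin.succ_pred k hne0⟩
      intro hc
      apply hne_last
      rw [← Fin.succ_pred k hne0, hc, Fin.succ_last]
  have e4 : (Finset.univ.erase (Fin.last n)).val.map
        (fun v : Fin (n+1) => ct (n+2) T v.succ)
      = (((Finset.univ.erase (0 : Fin (n+2))).erase (Fin.last (n+1))).val.map
          (ct (n+2) T)) := by
    rw [show (fun v : Fin (n+1) => ct (n+2) T v.succ) = (ct (n+2) T) ∘ Fin.succ from rfl,
      ← Multiset.map_map]
    congr 1
    rw [← e3, Finset.image_val_of_injOn ((Fin.succ_injective _).injOn)]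
  have hmapg : (Finset.univ.erase (Fin.last n)).val.map
        (fun v : Fin (n+1) => ct (n+2) T v.succ)
      = (Finset.univ.erase (Fin.last n)).val.map g := by
    rw [e4, e2, hg2, hcim, Multiset.erase_comm]
  obtain ⟨σ, hσout, hσin⟩ := exists_perm_of_map_eq _ _ _ hmapg
  have hσlast : σ (Fin.last n) = Fin.last n := hσout _ (Finset.notMem_erase _ _)
  have hall : ∀ v : Fin (n+1), ct (n+2) T (σ v).succ = g v := by
    intro v
    rcases eq_or_ne v (Fin.last n) with rfl | hne
    · rw [hσlast, Fin.succ_last, hctlast, hg1]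
    · exact hσin v (Finset.mem_erase.2 ⟨hne, Finset.mem_univ _⟩)
  have heval : (MvPolynomial.eval fun v : Fin (n + 1) => ((ct (n+2) T v.succ : ℤ) : ℂ)) f
      = (MvPolynomial.eval fun v : Fin (n + 1) => ((g v : ℤ) : ℂ)) f := by
    conv_lhs => rw [← hsym σ hσlast]
    rw [MvPolynomial.eval_rename]
    have hfun : ((fun v : Fin (n+1) => ((ct (n+2) T v.succ : ℤ) : ℂ)) ∘ σ)
        = fun v : Fin (n+1) => ((g v : ℤ) : ℂ) := by
      funext v
      simp only [Function.comp_apply]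
      exact_mod_cast congrArg (fun z : ℤ => (z : ℂ)) (hall v)
    rw [hfun]
  exact heval

end NC
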